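/- Let N(m) denote the cardinality of the OS-LOCO code OSC(m). There exists a unique real number λ with λ³ = 8λ² − λ + 6; this λ satisfies 7 < λ < 8, and (N(m))^{1/m} → λ as m → ∞. (Hence the capacity of the OS-LOCO constraint is log₂ λ ≈ 2.9944 input bits per coded symbol.) -/
import Mathlib


/-- The OS-LOCO code: words of length `m` over the alphabet `{0,...,7}`
(position `m-1` most significant) containing no contiguous subword `0 2 0`
and no contiguous subword `7 5 7`. -/
def OSC (m : ℕ) : Set (Fin m → Fin 8) :=
  {c | ∀ i : ℕ, ∀ h : i + 2 < m,
      ¬(c ⟨i + 2, h⟩ = 0 ∧ c ⟨i + 1, by omega⟩ = 2 ∧ c ⟨i, by omega⟩ = 0) ∧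
      ¬(c ⟨i + 2, h⟩ = 7 ∧ c ⟨i + 1, by omega⟩ = 5 ∧ c ⟨i, by omega⟩ = 7)}

namespace OSCp
open Finset

abbrev W (m : ℕ) := Fin m → Fin 8

/-! ### snoc lemmas -/

lemma init_mem (n : ℕ) (c : W (n+2)) (s : Fin 8) (h : (Fin.snoc c s : W (n+3)) ∈ OSC (n+3)) :
    c ∈ OSC (n+2) := by
  intro i hi
  have H := h i (by omega)
  have f2 : (⟨i+2, by omega⟩ : Fin (n+3)) = Fin.castSucc ⟨i+2, hi⟩ := Fin.ext rfl
  have f1 : (⟨i+1, by omega⟩ : Fin (n+3)) = Fin.castSucc ⟨i+1, by omega⟩ := Fin.ext rfl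
  have f0 : (⟨i, by omega⟩ : Fin (n+3)) = Fin.castSucc ⟨i, by omega⟩ := Fin.ext rfl
  rw [f2, f1, f0] at H
  simp only [Fin.snoc_castSucc] at H
  exact H

lemma last_cond (n : ℕ) (c : W (n+2)) (s : Fin 8) (h : (Fin.snoc c s : W (n+3)) ∈ OSC (n+3)) :
    ¬(s = 0 ∧ c ⟨n+1, by omega⟩ = 2 ∧ c ⟨n, by omega⟩ = 0) ∧
    ¬(s = 7 ∧ c ⟨n+1, by omega⟩ = 5 ∧ c ⟨n, by omega⟩ = 7) := by
  have hlast := h n (by omega)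
  have e2 : (⟨n+2, by omega⟩ : Fin (n+3)) = Fin.last (n+2) := Fin.ext rfl
  have e1 : (⟨n+1, by omega⟩ : Fin (n+3)) = Fin.castSucc ⟨n+1, by omega⟩ := Fin.ext rfl
  have e0 : (⟨n, by omega⟩ : Fin (n+3)) = Fin.castSucc ⟨n, by omega⟩ := Fin.ext rfl
  rw [e2, e1, e0] at hlast
  simp only [Fin.snoc_last, Fin.snoc_castSucc] at hlast
  exact hlast

lemma snoc_mem (n : ℕ) (c : W (n+2)) (s : Fin 8) (hc : c ∈ OSC (n+2))
    (hA : ¬(s = 0 ∧ c ⟨n+1, by omega⟩ = 2 ∧ c ⟨n, by omega⟩ = 0))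
    (hB : ¬(s = 7 ∧ c ⟨n+1, by omega⟩ = 5 ∧ c ⟨n, by omega⟩ = 7)) :
    (Fin.snoc c s : W (n+3)) ∈ OSC (n+3) := by
  intro i hi
  by_cases hlt : i + 2 < n + 2
  · have H := hc i hlt
    have f2 : (⟨i+2, hi⟩ : Fin (n+3)) = Fin.castSucc ⟨i+2, hlt⟩ := Fin.ext rfl
    have f1 : (⟨i+1, by omega⟩ : Fin (n+3)) = Fin.castSucc ⟨i+1, by omega⟩ := Fin.ext rfl
    have f0 : (⟨i, by omega⟩ : Fin (n+3)) = Fin.castSucc ⟨i, by omega⟩ := Fin.ext rfl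
    rw [f2, f1, f0]
    simp only [Fin.snoc_castSucc]
    exact H
  · have hin : i = n := by omega
    subst hin
    have f2 : (⟨i+2, hi⟩ : Fin (i+3)) = Fin.last (i+2) := Fin.ext rfl
    have f1 : (⟨i+1, by omega⟩ : Fin (i+3)) = Fin.castSucc ⟨i+1, by omega⟩ := Fin.ext rfl
    have f0 : (⟨i, by omega⟩ : Fin (i+3)) = Fin.castSucc ⟨i, by omega⟩ := Fin.ext rfl
    rw [f2, f1, f0]
    simp only [Fin.snoc_last, Fin.snoc_castSucc]
    exact ⟨fun h => hA ⟨h.1, h.2.1, h.2.2⟩, fun h => hB ⟨h.1, h.2.1, h.2.2⟩⟩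

lemma snoc_mem_iff (n : ℕ) (c : W (n+2)) (s : Fin 8) :
    ((Fin.snoc c s : W (n+3)) ∈ OSC (n+3)) ↔ (c ∈ OSC (n+2) ∧
      ¬(s = 0 ∧ c ⟨n+1, by omega⟩ = 2 ∧ c ⟨n, by omega⟩ = 0) ∧
      ¬(s = 7 ∧ c ⟨n+1, by omega⟩ = 5 ∧ c ⟨n, by omega⟩ = 7)) :=
  ⟨fun h => ⟨init_mem n c s h, last_cond n c s h⟩,
   fun ⟨hc, hA, hB⟩ => snoc_mem n c s hc hA hB⟩

lemma snoc2 (n : ℕ) (c : W (n+2)) (s : Fin 8) (h : n+2 < n+3) :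
    (Fin.snoc c s : W (n+3)) ⟨n+2, h⟩ = s := by
  have e : (⟨n+2, h⟩ : Fin (n+3)) = Fin.last (n+2) := Fin.ext rfl
  rw [e, Fin.snoc_last]

lemma snoc1 (n : ℕ) (c : W (n+2)) (s : Fin 8) (h : n+1 < n+3) :
    (Fin.snoc c s : W (n+3)) ⟨n+1, h⟩ = c ⟨n+1, by omega⟩ := by
  have e : (⟨n+1, h⟩ : Fin (n+3)) = Fin.castSucc ⟨n+1, by omega⟩ := Fin.ext rfl
  rw [e, Fin.snoc_castSucc]

lemma snoc0 (n : ℕ) (c : W (n+2)) (s : Fin 8) (h : n < n+3) :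
    (Fin.snoc c s : W (n+3)) ⟨n, h⟩ = c ⟨n, by omega⟩ := by
  have e : (⟨n, h⟩ : Fin (n+3)) = Fin.castSucc ⟨n, by omega⟩ := Fin.ext rfl
  rw [e, Fin.snoc_castSucc]

/-! ### generic counting -/

lemma card_split {α : Type*} [Fintype α] (P Q : α → Prop) :
    Nat.card {x // P x} =
      Nat.card {x // P x ∧ Q x} + Nat.card {x // P x ∧ ¬Q x} := by
  classical
  simp only [Nat.card_eq_fintype_card, Fintype.card_subtype]
  rw [← Finset.card_filter_add_card_filter_not (p := Q) (s := univ.filter P)]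
  congr 1 <;> rw [Finset.filter_filter]

lemma card_prod_sum {α β : Type*} [Fintype α] [Fintype β] (P : α → β → Prop) :
    Nat.card {x : α × β // P x.1 x.2} = ∑ a : α, Nat.card {b // P a b} := by
  classical
  rw [Nat.card_congr (Equiv.subtypeProdEquivSigmaSubtype P), Nat.card_eq_fintype_card,
    Fintype.card_sigma]
  simp [Nat.card_eq_fintype_card]

lemma sum_classes {α : Type*} [Fintype α] (OK A B : α → Prop) (f : α → ℕ) (wa wb wr : ℕ)
    (h0 : ∀ x, ¬OK x → f x = 0)
    (ha : ∀ x, OK x → A x → f x = wa)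
    (hb : ∀ x, OK x → B x → f x = wb)
    (hr : ∀ x, OK x → ¬A x → ¬B x → f x = wr)
    (hAB : ∀ x, A x → ¬B x) :
    ∑ x, f x = wa * Nat.card {x // OK x ∧ A x} + wb * Nat.card {x // OK x ∧ B x}
      + wr * Nat.card {x // OK x ∧ ¬A x ∧ ¬B x} := by
  classical
  have key : ∀ x, f x = wa * (if OK x ∧ A x then 1 else 0)
      + wb * (if OK x ∧ B x then 1 else 0)
      + wr * (if OK x ∧ ¬A x ∧ ¬B x then 1 else 0) := by
    intro x
    by_cases hOK : OK x
    · by_cases hA : A x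
      · have := hAB x hA
        simp [hOK, hA, this, ha x hOK hA]
      · by_cases hB : B x
        · simp [hOK, hA, hB, hb x hOK hB]
        · simp [hOK, hA, hB, hr x hOK hA hB]
    · simp [hOK, h0 x hOK]
  rw [Finset.sum_congr rfl (fun x _ => key x)]
  simp only [Finset.sum_add_distrib, ← Finset.mul_sum]
  simp [Nat.card_eq_fintype_card, Fintype.card_subtype, Finset.sum_ite_eq,
    Finset.sum_boole]

/-! ### state classes -/

def da (n : ℕ) (c : W (n+2)) : Prop :=
  (c ⟨n+1, by omega⟩ = 2 ∧ c ⟨n, by omega⟩ = 0) ∨ (c ⟨n+1, by omega⟩ = 5 ∧ c ⟨n, by omega⟩ = 7)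

def db (n : ℕ) (c : W (n+2)) : Prop :=
  c ⟨n+1, by omega⟩ = 0 ∨ c ⟨n+1, by omega⟩ = 7

noncomputable def aN (n : ℕ) : ℕ := Nat.card {c : W (n+2) // c ∈ OSC (n+2) ∧ da n c}
noncomputable def bN (n : ℕ) : ℕ := Nat.card {c : W (n+2) // c ∈ OSC (n+2) ∧ db n c}
noncomputable def rN (n : ℕ) : ℕ :=
  Nat.card {c : W (n+2) // c ∈ OSC (n+2) ∧ ¬da n c ∧ ¬db n c}

lemma da_not_db (n : ℕ) (c : W (n+2)) (h : da n c) : ¬db n c := by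
  rcases h with ⟨h1, _⟩ | ⟨h1, _⟩ <;> rintro (h2 | h2) <;> rw [h1] at h2 <;> exact absurd h2 (by decide)

lemma partitionN (n : ℕ) :
    Nat.card {c : W (n+2) // c ∈ OSC (n+2)} = aN n + bN n + rN n := by
  rw [card_split (fun c : W (n+2) => c ∈ OSC (n+2)) (da n)]
  rw [card_split (fun c : W (n+2) => c ∈ OSC (n+2) ∧ ¬da n c) (db n)]
  rw [aN, bN, rN, add_assoc]
  congr 1
  congr 1
  · apply Nat.card_congr (Equiv.subtypeEquivRight _)
    intro c
    constructor
    · rintro ⟨⟨h1, _⟩, h2⟩; exact ⟨h1, h2⟩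
    · rintro ⟨h1, h2⟩; exact ⟨⟨h1, fun hda => da_not_db n c hda h2⟩, h2⟩
  · apply Nat.card_congr (Equiv.subtypeEquivRight _)
    intro c
    tauto

def snocEquiv (n : ℕ) : (W (n+2) × Fin 8) ≃ W (n+3) where
  toFun p := Fin.snoc p.1 p.2
  invFun c := (Fin.init c, c (Fin.last _))
  left_inv p := by
    refine Prod.ext ?_ ?_
    · exact Fin.init_snoc (α := fun _ : Fin (n+3) => Fin 8) p.2 p.1
    · exact Fin.snoc_last (α := fun _ : Fin (n+3) => Fin 8) p.2 p.1
  right_inv c := Fin.snoc_init_self c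

lemma card_step (n : ℕ) (Q : W (n+3) → Prop) :
    Nat.card {c' : W (n+3) // Q c'} =
      ∑ c : W (n+2), Nat.card {s : Fin 8 // Q (Fin.snoc c s)} := by
  rw [← card_prod_sum (fun c s => Q (Fin.snoc c s))]
  exact (Nat.card_congr (Equiv.subtypeEquiv (snocEquiv n) (fun p => Iff.rfl))).symm



/-! ### transitions -/

lemma fin_facts : ((0:Fin 8) = 2) = False ∧ ((0:Fin 8) = 5) = False := by decide

lemma trans_a (n : ℕ) : aN (n+1) = bN n := by
  have e : aN (n+1) = Nat.card {c' : W (n+3) // c' ∈ OSC (n+3) ∧ da (n+1) c'} := rfl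
  rw [e, card_step n (fun c' => c' ∈ OSC (n+3) ∧ da (n+1) c')]
  rw [sum_classes (fun c : W (n+2) => c ∈ OSC (n+2)) (da n) (db n) _ 0 1 0 ?h0 ?ha ?hb ?hr (da_not_db n)]
  · rw [← aN, ← bN, ← rN]; ring
  case h0 =>
    intro c hOK
    have : IsEmpty {s : Fin 8 // (Fin.snoc c s : W (n+3)) ∈ OSC (n+3) ∧ da (n+1) (Fin.snoc c s)} :=
      ⟨fun ⟨s, hs⟩ => hOK (init_mem n c s hs.1)⟩
    simp [Nat.card_eq_fintype_card]
  case ha =>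
    intro c hOK hA
    rcases hA with ⟨h1, h0⟩ | ⟨h1, h0⟩ <;>
    · simp only [snoc_mem_iff, da, snoc2, snoc1, snoc0, h1, h0, hOK]
      rw [Nat.card_eq_fintype_card]
      decide
  case hb =>
    intro c hOK hB
    rcases hB with h1 | h1 <;>
    · simp only [snoc_mem_iff, da, snoc2, snoc1, snoc0, h1, hOK, Fin.reduceEq,
        false_and, and_false, and_true, true_and, not_false_iff, or_false, false_or,
        not_false_eq_true]
      rw [Nat.card_eq_fintype_card]
      decide
  case hr =>
    intro c hOK hA hB
    rw [da] at hA
    rw [db] at hB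
    push_neg at hA hB
    have : IsEmpty {s : Fin 8 // (Fin.snoc c s : W (n+3)) ∈ OSC (n+3) ∧ da (n+1) (Fin.snoc c s)} := by
      constructor
      rintro ⟨s, hs, hcls⟩
      rw [da] at hcls
      rcases hcls with ⟨-, h⟩ | ⟨-, h⟩
      · rw [snoc1] at h; exact hB.1 h
      · rw [snoc1] at h; exact hB.2 h
    simp [Nat.card_eq_fintype_card]



lemma trans_b (n : ℕ) : bN (n+1) = 1 * aN n + 2 * bN n + 2 * rN n := by
  have e : bN (n+1) = Nat.card {c' : W (n+3) // c' ∈ OSC (n+3) ∧ db (n+1) c'} := rfl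
  rw [e, card_step n (fun c' => c' ∈ OSC (n+3) ∧ db (n+1) c')]
  rw [sum_classes (fun c : W (n+2) => c ∈ OSC (n+2)) (da n) (db n) _ 1 2 2 ?h0 ?ha ?hb ?hr (da_not_db n)]
  · rfl
  case h0 =>
    intro c hOK
    have : IsEmpty {s : Fin 8 // (Fin.snoc c s : W (n+3)) ∈ OSC (n+3) ∧ db (n+1) (Fin.snoc c s)} :=
      ⟨fun ⟨s, hs⟩ => hOK (init_mem n c s hs.1)⟩
    simp [Nat.card_eq_fintype_card]
  case ha =>
    intro c hOK hA
    rcases hA with ⟨h1, h0⟩ | ⟨h1, h0⟩ <;>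
    · simp only [snoc_mem_iff, db, snoc2, snoc1, snoc0, h1, h0, hOK, Fin.reduceEq,
        false_and, and_false, and_true, true_and, not_false_iff, or_false, false_or,
        not_false_eq_true]
      rw [Nat.card_eq_fintype_card]
      decide
  case hb =>
    intro c hOK hB
    rcases hB with h1 | h1 <;>
    · simp only [snoc_mem_iff, db, snoc2, snoc1, snoc0, h1, hOK, Fin.reduceEq,
        false_and, and_false, and_true, true_and, not_false_iff, or_false, false_or,
        not_false_eq_true]
      rw [Nat.card_eq_fintype_card]
      decide
  case hr =>
    intro c hOK hA hB
    rw [da] at hA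
    push_neg at hA
    refine Eq.trans (Nat.card_congr (Equiv.subtypeEquivRight (fun s => ?_)))
      (show Nat.card {s : Fin 8 // s = 0 ∨ s = 7} = 2 by rw [Nat.card_eq_fintype_card]; decide)
    constructor
    · rintro ⟨hmem, hcls⟩
      simp only [db, snoc2] at hcls
      exact hcls
    · intro hs
      constructor
      · apply snoc_mem n c s hOK
        · rintro ⟨h1, h2, h3⟩; exact hA.1 h2 h3
        · rintro ⟨h1, h2, h3⟩; exact hA.2 h2 h3
      · simp only [db, snoc2]; exact hs

lemma trans_r (n : ℕ) : rN (n+1) = 6 * aN n + 5 * bN n + 6 * rN n := by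
  have e : rN (n+1) = Nat.card {c' : W (n+3) // c' ∈ OSC (n+3) ∧ ¬da (n+1) c' ∧ ¬db (n+1) c'} := rfl
  rw [e, card_step n (fun c' => c' ∈ OSC (n+3) ∧ ¬da (n+1) c' ∧ ¬db (n+1) c')]
  rw [sum_classes (fun c : W (n+2) => c ∈ OSC (n+2)) (da n) (db n) _ 6 5 6 ?h0 ?ha ?hb ?hr (da_not_db n)]
  · rfl
  case h0 =>
    intro c hOK
    have : IsEmpty {s : Fin 8 // (Fin.snoc c s : W (n+3)) ∈ OSC (n+3) ∧
        ¬da (n+1) (Fin.snoc c s) ∧ ¬db (n+1) (Fin.snoc c s)} :=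
      ⟨fun ⟨s, hs⟩ => hOK (init_mem n c s hs.1)⟩
    simp [Nat.card_eq_fintype_card]
  case ha =>
    intro c hOK hA
    rcases hA with ⟨h1, h0⟩ | ⟨h1, h0⟩ <;>
    · simp only [snoc_mem_iff, da, db, snoc2, snoc1, snoc0, h1, h0, hOK, Fin.reduceEq,
        false_and, and_false, and_true, true_and, not_false_iff, or_false, false_or,
        not_false_eq_true]
      rw [Nat.card_eq_fintype_card]
      decide
  case hb =>
    intro c hOK hB
    rcases hB with h1 | h1 <;>
    · simp only [snoc_mem_iff, da, db, snoc2, snoc1, snoc0, h1, hOK, Fin.reduceEq,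
        false_and, and_false, and_true, true_and, not_false_iff, or_false, false_or,
        not_false_eq_true]
      rw [Nat.card_eq_fintype_card]
      decide
  case hr =>
    intro c hOK hA hB
    rw [da] at hA
    rw [db] at hB
    push_neg at hA hB
    refine Eq.trans (Nat.card_congr (Equiv.subtypeEquivRight (fun s => ?_)))
      (show Nat.card {s : Fin 8 // ¬(s = 0 ∨ s = 7)} = 6 by rw [Nat.card_eq_fintype_card]; decide)
    constructor
    · rintro ⟨hmem, hcls⟩
      simp only [db, snoc2] at hcls
      exact hcls.2
    · intro hs
      refine ⟨?_, ?_, ?_⟩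
      · apply snoc_mem n c s hOK
        · rintro ⟨h1, h2, h3⟩; exact hA.1 h2 h3
        · rintro ⟨h1, h2, h3⟩; exact hA.2 h2 h3
      · simp only [da, snoc2, snoc1]
        rintro (⟨h1, h2⟩ | ⟨h1, h2⟩)
        · exact hB.1 h2
        · exact hB.2 h2
      · simp only [db, snoc2]; exact hs

/-! ### base values -/

lemma mem_two (c : W 2) : c ∈ OSC 2 := fun i h => absurd h (by omega)

lemma aN0 : aN 0 = 2 := by
  rw [aN, Nat.card_congr (Equiv.subtypeEquivRight (fun c => and_iff_right (mem_two c)))]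
  simp only [da]
  rw [Nat.card_eq_fintype_card]
  decide

lemma bN0 : bN 0 = 16 := by
  rw [bN, Nat.card_congr (Equiv.subtypeEquivRight (fun c => and_iff_right (mem_two c)))]
  simp only [db]
  rw [Nat.card_eq_fintype_card]
  decide

lemma rN0 : rN 0 = 46 := by
  rw [rN, Nat.card_congr (Equiv.subtypeEquivRight (fun c => and_iff_right (mem_two c)))]
  simp only [da, db]
  rw [Nat.card_eq_fintype_card]
  decide

lemma ncard_eq (n : ℕ) : (OSC (n+2)).ncard = aN n + bN n + rN n := partitionN n

/-! ### analysis -/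

open Filter

-- root facts
lemma root_gt7 (lam : ℝ) (h : lam ^ 3 = 8 * lam ^ 2 - lam + 6) : 7 < lam := by
  by_contra hc
  push_neg at hc
  nlinarith [sq_nonneg lam, sq_nonneg (2*lam - 1), mul_nonneg (sq_nonneg lam) (by linarith : (0:ℝ) ≤ 7 - lam)]

lemma root_lt8 (lam : ℝ) (h : lam ^ 3 = 8 * lam ^ 2 - lam + 6) : lam < 8 := by
  by_contra hc
  push_neg at hc
  nlinarith [mul_nonneg (sq_nonneg lam) (by linarith : (0:ℝ) ≤ lam - 8)]

lemma root_unique (x y : ℝ) (hx : x ^ 3 = 8 * x ^ 2 - x + 6) (hy : y ^ 3 = 8 * y ^ 2 - y + 6) :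
    x = y := by
  have h7x := root_gt7 x hx; have h8x := root_lt8 x hx
  have h7y := root_gt7 y hy; have h8y := root_lt8 y hy
  have key : (x - y) * (x^2 + x*y + y^2 - 8*(x+y) + 1) = 0 := by linear_combination hx - hy
  have hpos : 0 < x^2 + x*y + y^2 - 8*(x+y) + 1 := by nlinarith
  have := mul_eq_zero.1 key
  rcases this with h | h
  · linarith
  · linarith

lemma root_exists : ∃ lam : ℝ, lam ^ 3 = 8 * lam ^ 2 - lam + 6 := by
  have hcont : ContinuousOn (fun x : ℝ => x ^ 3 - 8 * x ^ 2 + x - 6) (Set.Icc 7 8) := by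
    fun_prop
  have := intermediate_value_Icc (by norm_num : (7:ℝ) ≤ 8) hcont
  have hmem : (0:ℝ) ∈ Set.Icc ((7:ℝ)^3 - 8*7^2 + 7 - 6) ((8:ℝ)^3 - 8*8^2 + 8 - 6) := by
    norm_num
  obtain ⟨c, _, hc⟩ := this hmem
  simp only at hc
  exact ⟨c, by linarith⟩

-- rpow limit helper
lemma const_rpow_inv_tendsto (K : ℝ) (hK : 0 < K) :
    Tendsto (fun m : ℕ => K ^ (1 / (m:ℝ))) atTop (nhds 1) := by
  have h := (tendsto_const_nhds (x := K) (f := atTop)).rpow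
      tendsto_one_div_atTop_nhds_zero_nat (Or.inl hK.ne')
  simpa using h

lemma pow_rpow_inv (lam : ℝ) (hlam : 0 < lam) (m : ℕ) (hm : m ≠ 0) :
    ((lam ^ m : ℝ)) ^ (1 / (m:ℝ)) = lam := by
  rw [← Real.rpow_natCast lam m, ← Real.rpow_mul hlam.le]
  rw [mul_one_div_cancel (by exact_mod_cast hm : (m:ℝ) ≠ 0), Real.rpow_one]

-- main sandwich
lemma sandwich_tendsto (lam L1 L2 : ℝ) (hlam : 0 < lam) (hL1 : 0 < L1) (hL2 : 0 < L2)
    (u : ℕ → ℕ)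
    (hlow : ∀ m : ℕ, 2 ≤ m → L1 * lam ^ m ≤ (u m : ℝ))
    (hhigh : ∀ m : ℕ, 2 ≤ m → (u m : ℝ) ≤ L2 * lam ^ m) :
    Tendsto (fun m : ℕ => ((u m : ℝ)) ^ (1 / (m:ℝ))) atTop (nhds lam) := by
  have t1 : Tendsto (fun m : ℕ => L1 ^ (1/(m:ℝ)) * lam) atTop (nhds lam) := by
    simpa using (const_rpow_inv_tendsto L1 hL1).mul_const lam
  have t2 : Tendsto (fun m : ℕ => L2 ^ (1/(m:ℝ)) * lam) atTop (nhds lam) := by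
    simpa using (const_rpow_inv_tendsto L2 hL2).mul_const lam
  apply tendsto_of_tendsto_of_tendsto_of_le_of_le' t1 t2
  · filter_upwards [eventually_ge_atTop 2] with m hm
    have h := hlow m hm
    have hmne : m ≠ 0 := by omega
    have hle := Real.rpow_le_rpow (by positivity) h (by positivity : (0:ℝ) ≤ 1/(m:ℝ))
    rwa [Real.mul_rpow hL1.le (by positivity), pow_rpow_inv lam hlam m hmne] at hle
  · filter_upwards [eventually_ge_atTop 2] with m hm
    have h := hhigh m hm
    have hmne : m ≠ 0 := by omega
    have hle := Real.rpow_le_rpow (by positivity) h (by positivity : (0:ℝ) ≤ 1/(m:ℝ))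
    rwa [Real.mul_rpow hL2.le (by positivity), pow_rpow_inv lam hlam m hmne] at hle

lemma bounds (lam : ℝ) (hroot : lam ^ 3 = 8 * lam ^ 2 - lam + 6)
    (h7 : 7 < lam) (h8 : lam < 8) :
    ∀ n : ℕ,
      (lam^(n+2) * 1 ≤ 64 * (aN n : ℝ) ∧ lam^(n+2) * lam ≤ 64 * (bN n : ℝ) ∧
        lam^(n+2) * ((lam^2-2*lam-1)/2) ≤ 64 * (rN n : ℝ)) ∧
      ((aN n : ℝ) ≤ lam^(n+2) * 1 ∧ (bN n : ℝ) ≤ lam^(n+2) * lam ∧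
        (rN n : ℝ) ≤ lam^(n+2) * ((lam^2-2*lam-1)/2)) := by
  intro n
  induction n with
  | zero =>
    rw [aN0, bN0, rN0]
    norm_num
    constructor
    · refine ⟨by nlinarith, by nlinarith, by nlinarith⟩
    · refine ⟨by nlinarith, by nlinarith, by nlinarith⟩
  | succ n ih =>
    obtain ⟨⟨la, lb, lr⟩, ⟨ua, ub, ur⟩⟩ := ih
    have hp : lam^(n+1+2) = lam^(n+2)*lam := by ring
    have hX : (0:ℝ) ≤ lam^(n+2) := by positivity
    have key : lam^(n+2) * (3*lam^2 - lam + 3) = (lam^(n+2)*lam) * ((lam^2-2*lam-1)/2) := by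
      linear_combination (-(lam^(n+2))/2) * hroot
    refine ⟨⟨?_, ?_, ?_⟩, ?_, ?_, ?_⟩
    · rw [trans_a, hp]; linarith
    · rw [trans_b, hp]; push_cast; linarith
    · rw [trans_r, hp]; push_cast; linarith
    · rw [trans_a, hp]; linarith
    · rw [trans_b, hp]; push_cast; linarith
    · rw [trans_r, hp]; push_cast; linarith

end OSCp

theorem stmt8 :
    (∃! lam : ℝ, lam ^ 3 = 8 * lam ^ 2 - lam + 6) ∧
    ∀ lam : ℝ, lam ^ 3 = 8 * lam ^ 2 - lam + 6 →
      7 < lam ∧ lam < 8 ∧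
      Filter.Tendsto (fun m : ℕ => ((OSC m).ncard : ℝ) ^ (1 / (m : ℝ)))
        Filter.atTop (nhds lam) := by
  constructor
  · obtain ⟨lam, hlam⟩ := OSCp.root_exists
    exact ⟨lam, hlam, fun y hy => OSCp.root_unique y lam hy hlam⟩
  · intro lam hroot
    have h7 := OSCp.root_gt7 lam hroot
    have h8 := OSCp.root_lt8 lam hroot
    refine ⟨h7, h8, ?_⟩
    have hlam0 : (0:ℝ) < lam := by linarith
    have hSpos : (0:ℝ) < 1 + lam + (lam^2-2*lam-1)/2 := by nlinarith
    have B := OSCp.bounds lam hroot h7 h8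
    apply OSCp.sandwich_tendsto lam ((1 + lam + (lam^2-2*lam-1)/2)/64) (1 + lam + (lam^2-2*lam-1)/2)
      hlam0 (by positivity) hSpos (fun m => (OSC m).ncard)
    · intro m hm
      obtain ⟨n, rfl⟩ : ∃ n, m = n + 2 := ⟨m - 2, by omega⟩
      have hpart : ((OSC (n+2)).ncard : ℝ) = (OSCp.aN n : ℝ) + (OSCp.bN n : ℝ) + (OSCp.rN n : ℝ) := by
        rw [OSCp.ncard_eq n]; push_cast; ring
      obtain ⟨⟨la, lb, lr⟩, -⟩ := B n
      rw [hpart]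
      nlinarith [la, lb, lr]
    · intro m hm
      obtain ⟨n, rfl⟩ : ∃ n, m = n + 2 := ⟨m - 2, by omega⟩
      have hpart : ((OSC (n+2)).ncard : ℝ) = (OSCp.aN n : ℝ) + (OSCp.bN n : ℝ) + (OSCp.rN n : ℝ) := by
        rw [OSCp.ncard_eq n]; push_cast; ring
      obtain ⟨-, ⟨ua, ub, ur⟩⟩ := B n
      rw [hpart]
      nlinarith [ua, ub, ur]
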